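/- Let X be a topological space with a filtration by closed subsets X = Z₀ ⊇ Z₁ ⊇ ⋯ ⊇ Z_{m+1} = ∅ and F a sheaf of abelian groups on X. Then there is a spectral sequence with E₁^{pq} = H^{p+q}_{Z_p∖Z_{p+1}}(X, F) (local cohomology with supports in the locally closed sets Z_p∖Z_{p+1}) converging to H^{p+q}(X, F). -/

import Mathlib

open CategoryTheory TopologicalSpace Opposite

/-- Sheaves of abelian groups on the topological space `X`. -/
abbrev AbSheaf (X : TopCat) : Type _ :=
  CategoryTheory.Sheaf (Opens.grothendieckTopology X) AddCommGrpCat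

/-- `Γ_A(G)`: the global sections of `G` with support contained in `A` (the sections whose
germ vanishes at every point outside `A`). -/
noncomputable def suppSections {X : TopCat} (G : AbSheaf X) (A : Set X) :
    AddSubgroup (G.val.obj (op ⊤)) :=
  ⨅ x : {x : X // x ∉ A}, AddMonoidHom.ker (TopCat.Presheaf.germ G.val ⊤ x.1 trivial).hom

/-- A cohomological spectral sequence of abelian groups: pages `E_r^{pq}`, differentials
`d_r : E_r^{pq} → E_r^{p+r, q-r+1}` squaring to zero, with `E_{r+1}` the cohomology of
`(E_r, d_r)`. -/
structure AbSpectralSequence where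
  /-- the pages -/
  E : ℕ → ℤ → ℤ → AddCommGrpCat
  /-- the differentials `d_r^{pq} : E_r^{pq} → E_r^{p+r, q-r+1}` -/
  d : ∀ (r : ℕ) (p q p' q' : ℤ), p' = p + r → q' = q - r + 1 → (E r p q ⟶ E r p' q')
  d_comp : ∀ (r : ℕ) (p q p' q' p'' q'' : ℤ) (h1 : p' = p + r) (h2 : q' = q - r + 1)
      (h3 : p'' = p' + r) (h4 : q'' = q' - r + 1),
      d r p q p' q' h1 h2 ≫ d r p' q' p'' q'' h3 h4 = 0
  page_iso : ∀ (r : ℕ) (p q pin qin pout qout : ℤ) (h1 : p = pin + r) (h2 : q = qin - r + 1)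
      (h3 : pout = p + r) (h4 : qout = q - r + 1),
      Nonempty ((E (r + 1) p q) ≃+
        (AddMonoidHom.ker (d r p q pout qout h3 h4).hom ⧸
          ((AddMonoidHom.range (d r pin qin p q h1 h2).hom).addSubgroupOf
            (AddMonoidHom.ker (d r p q pout qout h3 h4).hom))))

/-- Convergence of a spectral sequence to the graded groups `H^n`: there is a finite
decreasing filtration of each `H^n` whose graded pieces are, for `r` large (the pages
stabilize), isomorphic to `E_r^{p, n-p}`. -/
structure AbSSConvergesTo (S : AbSpectralSequence) (H : ℤ → AddCommGrpCat) where
  filt : ℤ → ∀ n : ℤ, AddSubgroup (H n)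
  antitone : ∀ (p p' : ℤ), p ≤ p' → ∀ n, filt p' n ≤ filt p n
  exhaustive : ∀ n, ∃ p₀ : ℤ, ∀ p ≤ p₀, filt p n = ⊤
  separated : ∀ n, ∃ p₁ : ℤ, ∀ p ≥ p₁, filt p n = ⊥
  graded : ∀ p q : ℤ, ∃ r₀ : ℕ, ∀ r ≥ r₀,
    Nonempty ((S.E r p q) ≃+
      (filt p (p + q) ⧸ ((filt (p + 1) (p + q)).addSubgroupOf (filt p (p + q)))))

/-- The map on global sections induced by `δ : K n ⟶ K n'`. -/
noncomputable def globMap {X : TopCat} {K : ℤ → AbSheaf X}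
    (δ : ∀ n n' : ℤ, n' = n + 1 → (K n ⟶ K n')) (n n' : ℤ) (h : n' = n + 1) :
    (K n).val.obj (op ⊤) ⟶ (K n').val.obj (op ⊤) :=
  (δ n n' h).hom.app (op ⊤)

/-- Relative cocycles for the filtration by supports: sections of `K^n` supported in
`Z_p` whose differential is supported in `Z_{p+1}`; representing cocycles of the quotient
complex `Γ_{Z_p}(K^•)/Γ_{Z_{p+1}}(K^•)`, whose cohomology is the local cohomology
`H^•_{Z_p∖Z_{p+1}}(X, F)` (Godement). -/
noncomputable def relCocycles {X : TopCat} (Z : ℤ → Set X) {K : ℤ → AbSheaf X}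
    (δ : ∀ n n' : ℤ, n' = n + 1 → (K n ⟶ K n')) (p n : ℤ) :
    AddSubgroup ((K n).val.obj (op ⊤)) :=
  suppSections (K n) (Z p) ⊓
    AddSubgroup.comap (globMap δ n (n + 1) rfl).hom (suppSections (K (n + 1)) (Z (p + 1)))

/-- Relative coboundaries for the filtration by supports. -/
noncomputable def relCoboundaries {X : TopCat} (Z : ℤ → Set X) {K : ℤ → AbSheaf X}
    (δ : ∀ n n' : ℤ, n' = n + 1 → (K n ⟶ K n')) (p n : ℤ) :
    AddSubgroup ((K n).val.obj (op ⊤)) :=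
  (suppSections (K n) (Z (p + 1)) ⊔
      AddSubgroup.map (globMap δ (n - 1) n (by omega)).hom (suppSections (K (n - 1)) (Z p))) ⊓
    relCocycles Z δ p n

/-- `H^n(X, F)` computed from the flabby resolution `K^•`: cohomology of the complex of
global sections. -/
noncomputable def globalCohomology {X : TopCat} {K : ℤ → AbSheaf X}
    (δ : ∀ n n' : ℤ, n' = n + 1 → (K n ⟶ K n')) (n : ℤ) : AddCommGrpCat :=
  AddCommGrpCat.of
    (AddMonoidHom.ker (globMap δ n (n + 1) rfl).hom ⧸
      ((AddMonoidHom.range (globMap δ (n - 1) n (by omega)).hom).addSubgroupOf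
        (AddMonoidHom.ker (globMap δ n (n + 1) rfl).hom)))

/- ============ auxiliary development ============ -/

open AddSubgroup QuotientAddGroup

namespace Stmt19Aux

universe w

variable {C : ℤ → Type} [∀ n, AddCommGroup (C n)]
variable (D : ∀ n n' : ℤ, n' = n + 1 → (C n →+ C n'))
variable (F : ℤ → ∀ n : ℤ, AddSubgroup (C n))

/-- `Z_r^{p}` in degree `n`. -/
def Zg (r p n : ℤ) : AddSubgroup (C n) :=
  F p n ⊓ (F (p + r) (n + 1)).comap (D n (n + 1) rfl)

/-- The subgroup of "boundaries" at page `r`. -/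
def Bnd (r p n : ℤ) : AddSubgroup (C n) :=
  Zg D F (r - 1) (p + 1) n ⊔
    (Zg D F (r - 1) (p - r + 1) (n - 1)).map (D (n - 1) n (by ring))

/-- The pages. -/
abbrev Epage (r p n : ℤ) : Type _ :=
  ↥(Zg D F r p n) ⧸ (Bnd D F r p n).addSubgroupOf (Zg D F r p n)


section ULiftLayer

variable {A B : Type*} [AddCommGroup A] [AddCommGroup B]

/-- A hom between `ULift`s. -/
def uliftHom (f : A →+ B) : ULift.{w} A →+ ULift.{w} B where
  toFun x := ⟨f x.down⟩
  map_zero' := congrArg ULift.up (map_zero f)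
  map_add' x y := congrArg ULift.up (map_add f _ _)

/-- `up` as an `AddEquiv`. -/
def upEquiv : A ≃+ ULift.{w} A := AddEquiv.ulift.symm

theorem map_up_ker (g : A →+ B) :
    (AddMonoidHom.ker g).map (upEquiv.{w} (A := A) : A →+ ULift.{w} A) =
      AddMonoidHom.ker (uliftHom.{w} g) := by
  ext x
  constructor
  · rintro ⟨y, hy, rfl⟩
    have hy' : g y = 0 := hy
    show uliftHom g (upEquiv y) = 0
    exact congrArg ULift.up hy'
  · intro hx
    rw [AddMonoidHom.mem_ker] at hx
    exact ⟨x.down, congrArg ULift.down hx, rfl⟩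

theorem map_up_range (f : A →+ B) :
    (AddMonoidHom.range f).map (upEquiv.{w} (A := B) : B →+ ULift.{w} B) =
      AddMonoidHom.range (uliftHom.{w} f) := by
  ext x
  constructor
  · rintro ⟨y, ⟨a, rfl⟩, rfl⟩
    exact ⟨⟨a⟩, rfl⟩
  · rintro ⟨a, rfl⟩
    exact ⟨f a.down, ⟨a.down, rfl⟩, rfl⟩

/-- Transport of a subquotient along an `AddEquiv`. -/
noncomputable def subquotCongr {G H : Type*} [AddCommGroup G] [AddCommGroup H] (e : G ≃+ H)
    (Asub Bsub : AddSubgroup G) :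
    (↥Asub ⧸ Bsub.addSubgroupOf Asub) ≃+
      (↥(Asub.map (e : G →+ H)) ⧸
        (Bsub.map (e : G →+ H)).addSubgroupOf (Asub.map (e : G →+ H))) := by
  refine QuotientAddGroup.congr _ _ (e.addSubgroupMap Asub) ?_
  ext x
  constructor
  · rintro ⟨y, hy, rfl⟩
    exact ⟨(y : G), hy, rfl⟩
  · intro hx
    have hx' : (x : H) ∈ AddSubgroup.map (e : G →+ H) Bsub := hx
    obtain ⟨b, hb, hbe⟩ := hx'
    have hbA : b ∈ Asub := by
      obtain ⟨a, ha, hae⟩ := x.2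
      have hba : b = a := e.injective (hbe.trans hae.symm)
      rw [hba]; exact ha
    exact ⟨⟨b, hbA⟩, hb, Subtype.ext hbe⟩

end ULiftLayer

section lemmas

variable (hD2 : ∀ (n n' n'' : ℤ) (h : n' = n + 1) (h' : n'' = n' + 1) (x : C n),
    D n' n'' h' (D n n' h x) = 0)
variable (hFmono : ∀ p p' : ℤ, p ≤ p' → ∀ n, F p' n ≤ F p n)
variable (hFd : ∀ (p n n' : ℤ) (h : n' = n + 1), F p n ≤ (F p n').comap (D n n' h))

theorem mem_Zg {r p n n' : ℤ} (h : n' = n + 1) {x : C n} :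
    x ∈ Zg D F r p n ↔ x ∈ F p n ∧ D n n' h x ∈ F (p + r) n' := by
  subst h; exact Iff.rfl

theorem mem_Zg_of {r p n n' : ℤ} (h : n' = n + 1) {x : C n}
    (h1 : x ∈ F p n) (h2 : D n n' h x ∈ F (p + r) n') : x ∈ Zg D F r p n :=
  (mem_Zg D F h).2 ⟨h1, h2⟩

include hFmono in
theorem Zg_le {r r' p p' n : ℤ} (h1 : p ≤ p') (h2 : p + r ≤ p' + r') :
    Zg D F r' p' n ≤ Zg D F r p n :=
  inf_le_inf (hFmono _ _ h1 _) (comap_mono (hFmono _ _ h2 _))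

theorem Zg_le_F {r p n : ℤ} {x : C n} (hx : x ∈ Zg D F r p n) : x ∈ F p n := hx.1

theorem Zg_congr {r r' p p' : ℤ} (n : ℤ) (hr : r = r') (hp : p = p') :
    Zg D F r p n = Zg D F r' p' n := by subst hr hp; rfl

include hD2 in
theorem D_mem_Zg {r r' p p' n n' : ℤ} (h : n' = n + 1) (hp : p' = p + r) {x : C n}
    (hx : x ∈ Zg D F r p n) : D n n' h x ∈ Zg D F r' p' n' := by
  subst h hp
  refine (mem_Zg D F rfl).2 ⟨((mem_Zg D F rfl).1 hx).2, ?_⟩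
  rw [hD2 n (n + 1) (n + 1 + 1) rfl rfl x]
  exact zero_mem _

theorem Bnd_eq {r p : ℤ} (n₀ n : ℤ) (h : n = n₀ + 1) :
    Bnd D F r p n = Zg D F (r - 1) (p + 1) n ⊔
      (Zg D F (r - 1) (p - r + 1) n₀).map (D n₀ n h) := by
  have h' : n₀ = n - 1 := by omega
  subst h'; rfl

include hD2 hFmono in
theorem Bnd_le_Zg {r p n : ℤ} : Bnd D F r p n ≤ Zg D F r p n := by
  refine sup_le ?_ ?_
  · intro x hx
    rw [mem_Zg D F (n' := n + 1) rfl] at hx ⊢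
    refine ⟨hFmono p (p + 1) (by omega) n hx.1, ?_⟩
    have h2 := hx.2
    rw [show p + 1 + (r - 1) = p + r by ring] at h2
    exact h2
  · rintro x ⟨v, hv, rfl⟩
    have hv' := (mem_Zg D F (show n = (n - 1) + 1 by ring)).1 hv
    refine mem_Zg_of D F rfl ?_ ?_
    · have h2 := hv'.2
      rw [show p - r + 1 + (r - 1) = p by ring] at h2
      exact h2
    · rw [hD2 (n - 1) n (n + 1)]
      exact zero_mem _

include hD2 in
theorem Bnd_map_le {r p p' n n' : ℤ} (h : n' = n + 1) (hp : p' = p + r) :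
    (Bnd D F r p n).map (D n n' h) ≤ Bnd D F r p' n' := by
  subst h hp
  rw [Bnd_eq D F n (n + 1) rfl]
  rw [Bnd_eq D F (n - 1) n (by ring), AddSubgroup.map_sup]
  refine sup_le ?_ ?_
  · -- image of Zg (r-1) (p+1) lands in the `map` part
    refine le_trans ?_ le_sup_right
    exact map_mono (le_of_eq (Zg_congr D F n rfl (show p + 1 = p + r - r + 1 by ring)))
  · -- image of the map part is zero
    rintro x ⟨y, ⟨v, _, rfl⟩, rfl⟩
    rw [hD2 (n - 1) n (n + 1)]
    exact zero_mem _

/-- The differential on page `r`, on cocycle subgroups. -/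
def ZgD (r p n p' n' : ℤ) (h : n' = n + 1) (hp : p' = p + r) :
    ↥(Zg D F r p n) →+ ↥(Zg D F r p' n') :=
  AddMonoidHom.codRestrict ((D n n' h).comp (Zg D F r p n).subtype) _
    (fun x => D_mem_Zg D F hD2 h hp x.2)

/-- The differential on page `r`. -/
def dE (r p n p' n' : ℤ) (h : n' = n + 1) (hp : p' = p + r) :
    Epage D F r p n →+ Epage D F r p' n' :=
  QuotientAddGroup.map _ _ (ZgD D F hD2 r p n p' n' h hp)
    (by
      intro x hx
      rw [mem_addSubgroupOf] at hx
      rw [AddSubgroup.mem_comap, mem_addSubgroupOf]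
      exact Bnd_map_le D F hD2 h hp ⟨x.1, hx, rfl⟩)

theorem dE_mk (r p n p' n' : ℤ) (h : n' = n + 1) (hp : p' = p + r)
    (x : ↥(Zg D F r p n)) :
    dE D F hD2 r p n p' n' h hp (QuotientAddGroup.mk x) =
      QuotientAddGroup.mk (ZgD D F hD2 r p n p' n' h hp x) := rfl

theorem dE_dE (r p n p' n' p'' n'' : ℤ) (h : n' = n + 1) (hp : p' = p + r)
    (h' : n'' = n' + 1) (hp' : p'' = p' + r) (ξ : Epage D F r p n) :
    dE D F hD2 r p' n' p'' n'' h' hp' (dE D F hD2 r p n p' n' h hp ξ) = 0 := by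
  induction ξ using QuotientAddGroup.induction_on with
  | H x =>
    rw [dE_mk, dE_mk]
    have : ZgD D F hD2 r p' n' p'' n'' h' hp' (ZgD D F hD2 r p n p' n' h hp x) = 0 := by
      ext
      exact hD2 n n' n'' h h' x.1
    rw [this]
    rfl


/-- Congruence of subquotients. -/
def quotCongr {G : Type*} [AddCommGroup G] {A A' B B' : AddSubgroup G} (hA : A = A')
    (hB : B.addSubgroupOf A' = B'.addSubgroupOf A') :
    (↥A ⧸ B.addSubgroupOf A) ≃+ (↥A' ⧸ B'.addSubgroupOf A') := by
  subst hA; exact quotientAddEquivOfEq hB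

theorem mk_subtype_eq_zero_iff {G : Type*} [AddCommGroup G] {Kk N : AddSubgroup G} (x : ↥Kk) :
    (QuotientAddGroup.mk x : ↥Kk ⧸ N.addSubgroupOf Kk) = 0 ↔ (x : G) ∈ N := by
  rw [QuotientAddGroup.eq_zero_iff, mem_addSubgroupOf]

theorem mk_subtype_eq_iff {G : Type*} [AddCommGroup G] {Kk N : AddSubgroup G} (x y : ↥Kk) :
    (QuotientAddGroup.mk x : ↥Kk ⧸ N.addSubgroupOf Kk) = QuotientAddGroup.mk y ↔
      -(x : G) + (y : G) ∈ N := by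
  rw [QuotientAddGroup.eq, mem_addSubgroupOf]; rfl

include hD2 hFmono in
theorem core_page (r p n : ℤ) :
    Nonempty (Epage D F (r + 1) p n ≃+
      (↥(AddMonoidHom.ker (dE D F hD2 r p n (p + r) (n + 1) rfl rfl)) ⧸
        ((AddMonoidHom.range
            (dE D F hD2 r (p - r) (n - 1) p n (by ring) (by ring))).addSubgroupOf
          (AddMonoidHom.ker (dE D F hD2 r p n (p + r) (n + 1) rfl rfl))))) := by
  have hincl : Zg D F (r + 1) p n ≤ Zg D F r p n := Zg_le D F hFmono le_rfl (by omega)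
  have hker : ∀ x : ↥(Zg D F (r + 1) p n),
      (QuotientAddGroup.mk (AddSubgroup.inclusion hincl x) : Epage D F r p n) ∈
        AddMonoidHom.ker (dE D F hD2 r p n (p + r) (n + 1) rfl rfl) := by
    intro x
    rw [AddMonoidHom.mem_ker, dE_mk, mk_subtype_eq_zero_iff]
    show D n (n + 1) rfl (x : C n) ∈ Bnd D F r (p + r) (n + 1)
    exact AddSubgroup.mem_sup_left (D_mem_Zg D F hD2 rfl (by ring) x.2)
  set φ : ↥(Zg D F (r + 1) p n) →+
      (↥(AddMonoidHom.ker (dE D F hD2 r p n (p + r) (n + 1) rfl rfl)) ⧸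
        ((AddMonoidHom.range
            (dE D F hD2 r (p - r) (n - 1) p n (by ring) (by ring))).addSubgroupOf
          (AddMonoidHom.ker (dE D F hD2 r p n (p + r) (n + 1) rfl rfl)))) :=
    (QuotientAddGroup.mk' _).comp
      (AddMonoidHom.codRestrict
        ((QuotientAddGroup.mk' ((Bnd D F r p n).addSubgroupOf (Zg D F r p n))).comp
          (AddSubgroup.inclusion hincl)) _ hker) with hφdef
  have hφ : ∀ x, φ x = QuotientAddGroup.mk
      ⟨QuotientAddGroup.mk (AddSubgroup.inclusion hincl x), hker x⟩ := fun _ => rfl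
  -- surjectivity of φ
  have hsurj : Function.Surjective φ := by
    intro t
    obtain ⟨⟨ξ, hξ⟩, rfl⟩ := QuotientAddGroup.mk'_surjective _ t
    revert hξ
    induction ξ using QuotientAddGroup.induction_on with
    | H x =>
      intro hξ
      have hmem : D n (n + 1) rfl (x : C n) ∈ Bnd D F r (p + r) (n + 1) := by
        have h0 := hξ
        rw [AddMonoidHom.mem_ker, dE_mk, mk_subtype_eq_zero_iff] at h0
        exact h0
      rw [Bnd_eq D F n (n + 1) rfl, AddSubgroup.mem_sup] at hmem
      obtain ⟨z, hz, _, ⟨w, hw, rfl⟩, hsum⟩ := hmem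
      have hw' : w ∈ Zg D F (r - 1) (p + 1) n := by
        rwa [Zg_congr D F n rfl (show p + r - r + 1 = p + 1 by ring)] at hw
      have hxw : (x : C n) - w ∈ Zg D F (r + 1) p n := by
        refine mem_Zg_of D F rfl ?_ ?_
        · exact sub_mem (Zg_le_F D F x.2) (hFmono p (p + 1) (by omega) n (Zg_le_F D F hw'))
        · rw [map_sub]
          have he : D n (n + 1) rfl (x : C n) - D n (n + 1) rfl w = z := by
            rw [← hsum]; exact add_sub_cancel_right z _
          rw [he, show p + (r + 1) = p + r + 1 by ring]
          exact Zg_le_F D F hz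
      refine ⟨⟨(x : C n) - w, hxw⟩, ?_⟩
      rw [hφ]
      apply congrArg
      refine Subtype.ext ?_
      show (QuotientAddGroup.mk _ : Epage D F r p n) = QuotientAddGroup.mk x
      rw [mk_subtype_eq_iff]
      show -((x : C n) - w) + (x : C n) ∈ Bnd D F r p n
      have : -((x : C n) - w) + (x : C n) = w := by abel
      rw [this]
      exact AddSubgroup.mem_sup_left hw'
  -- kernel of φ
  have hkerφ : AddMonoidHom.ker φ =
      (Bnd D F (r + 1) p n).addSubgroupOf (Zg D F (r + 1) p n) := by
    ext x
    rw [AddMonoidHom.mem_ker, mem_addSubgroupOf, hφ, mk_subtype_eq_zero_iff]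
    show (QuotientAddGroup.mk (AddSubgroup.inclusion hincl x) : Epage D F r p n) ∈
        AddMonoidHom.range (dE D F hD2 r (p - r) (n - 1) p n (by ring) (by ring)) ↔ _
    constructor
    · rintro ⟨η, hη⟩
      revert hη
      induction η using QuotientAddGroup.induction_on with
      | H v =>
        intro hη
        rw [dE_mk] at hη
        have h1 : -(D (n - 1) n (by ring) (v : C (n - 1))) + (x : C n) ∈ Bnd D F r p n := by
          rw [mk_subtype_eq_iff] at hη
          exact hη
        rw [Bnd_eq D F (n - 1) n (by ring), AddSubgroup.mem_sup] at h1
        obtain ⟨a, ha, _, ⟨u, hu, rfl⟩, hsum⟩ := h1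
        have hDx : D n (n + 1) rfl (x : C n) ∈ F (p + 1 + r) (n + 1) := by
          have := ((mem_Zg D F rfl).1 x.2).2
          rwa [show p + (r + 1) = p + 1 + r by ring] at this
        have ha' : a ∈ Zg D F r (p + 1) n := by
          refine mem_Zg_of D F rfl (Zg_le_F D F ha) ?_
          have hav : a = (x : C n) - D (n - 1) n (by ring) (v : C (n - 1))
              - D (n - 1) n (by ring) u := by
            have h2 := eq_sub_of_add_eq hsum
            rw [h2]; abel
          rw [hav, map_sub, map_sub, hD2 (n - 1) n (n + 1), hD2 (n - 1) n (n + 1)]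
          simpa using hDx
        have hvu : (v : C (n - 1)) + u ∈ Zg D F r (p - r) (n - 1) := by
          refine add_mem v.2 (Zg_le D F hFmono (by omega) (by omega) hu)
        rw [Bnd_eq D F (n - 1) n (by ring), AddSubgroup.mem_sup]
        refine ⟨a, ?_, D (n - 1) n (by ring) ((v : C (n - 1)) + u), ⟨(v : C (n - 1)) + u, ?_, rfl⟩, ?_⟩
        · rwa [Zg_congr D F n (show r + 1 - 1 = r by ring) rfl]
        · rwa [Zg_congr D F (n - 1) (show r + 1 - 1 = r by ring)
            (show p - (r + 1) + 1 = p - r by ring)]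
        · show a + D (n - 1) n _ ((v : C (n - 1)) + u) = ((AddSubgroup.inclusion hincl x : ↥(Zg D F r p n)) : C n)
          rw [map_add]
          have h3 : a + (D (n - 1) n (by ring) (v : C (n - 1)) + D (n - 1) n (by ring) u)
              = D (n - 1) n (by ring) (v : C (n - 1)) + (a + D (n - 1) n (by ring) u) := by abel
          rw [h3, hsum]
          show _ = (x : C n)
          abel
    · intro hx
      rw [Bnd_eq D F (n - 1) n (by ring), AddSubgroup.mem_sup] at hx
      obtain ⟨a, ha, _, ⟨v, hv, rfl⟩, hsum⟩ := hx
      have ha' : a ∈ Zg D F r (p + 1) n := by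
        rwa [Zg_congr D F n (show r + 1 - 1 = r by ring) rfl] at ha
      have hv' : v ∈ Zg D F r (p - r) (n - 1) := by
        rwa [Zg_congr D F (n - 1) (show r + 1 - 1 = r by ring)
          (show p - (r + 1) + 1 = p - r by ring)] at hv
      refine ⟨QuotientAddGroup.mk ⟨v, hv'⟩, ?_⟩
      rw [dE_mk, mk_subtype_eq_iff]
      show -(D (n - 1) n (by ring) v) + (x : C n) ∈ Bnd D F r p n
      have he : -(D (n - 1) n (by ring) v) + (x : C n) = a := by rw [← hsum]; abel
      rw [he]
      exact AddSubgroup.mem_sup_left (Zg_le D F hFmono le_rfl (by omega) ha')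
  exact ⟨(quotientAddEquivOfEq hkerφ.symm).trans
    (QuotientAddGroup.quotientKerEquivOfSurjective φ hsurj)⟩


/-- Transport of pages along index equalities. -/
def EpageCongr {r r' p p' : ℤ} (n : ℤ) (hr : r = r') (hp : p = p') :
    Epage D F r p n ≃+ Epage D F r' p' n := by
  subst hr hp; exact AddEquiv.refl _

include hD2 hFmono in
theorem page_general (r p n pin nin pout nout : ℤ)
    (hinn : n = nin + 1) (hinp : p = pin + r) (houtn : nout = n + 1) (houtp : pout = p + r) :
    Nonempty (Epage D F (r + 1) p n ≃+
      (↥(AddMonoidHom.ker (dE D F hD2 r p n pout nout houtn houtp)) ⧸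
        ((AddMonoidHom.range (dE D F hD2 r pin nin p n hinn hinp)).addSubgroupOf
          (AddMonoidHom.ker (dE D F hD2 r p n pout nout houtn houtp))))) := by
  have e1 : pin = p - r := by omega
  have e2 : nin = n - 1 := by omega
  subst e1 e2 houtn houtp
  exact core_page D F hD2 hFmono r p n

theorem map_comap_D {p n₀ n : ℤ} (h : n = n₀ + 1) :
    AddSubgroup.map (D n₀ n h) ((F p (n₀ + 1)).comap (D n₀ (n₀ + 1) rfl)) =
      AddMonoidHom.range (D n₀ n h) ⊓ F p n := by
  subst h
  exact AddSubgroup.map_comap_eq _ _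

theorem Zg_stable {r p n : ℤ} (hbot : F (p + r) (n + 1) = ⊥) :
    Zg D F r p n = F p n ⊓ AddMonoidHom.ker (D n (n + 1) rfl) := by
  unfold Zg
  rw [hbot]
  rfl

theorem Bnd_stable {r p n : ℤ} (hbot : F (p + r) (n + 1) = ⊥)
    (htop : F (p - r + 1) (n - 1) = ⊤) :
    Bnd D F r p n = (F (p + 1) n ⊓ AddMonoidHom.ker (D n (n + 1) rfl)) ⊔
      (AddMonoidHom.range (D (n - 1) n (by ring)) ⊓ F p n) := by
  unfold Bnd
  congr 1
  · rw [show (Zg D F (r - 1) (p + 1) n : AddSubgroup (C n)) =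
        F (p + 1) n ⊓ ((F (p + 1 + (r - 1)) (n + 1)).comap (D n (n + 1) rfl)) from rfl]
    rw [show p + 1 + (r - 1) = p + r by ring, hbot]
    rfl
  · have hz : Zg D F (r - 1) (p - r + 1) (n - 1) =
        (F p ((n - 1) + 1)).comap (D (n - 1) ((n - 1) + 1) rfl) := by
      unfold Zg
      rw [htop, show p - r + 1 + (r - 1) = p by ring, top_inf_eq]
    rw [hz, map_comap_D D F (by ring)]

/-- Generic graded-piece comparison for the filtration on a subquotient. -/
theorem graded_iso {G : Type*} [AddCommGroup G] (Kk N A B : AddSubgroup G)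
    (hN : N ≤ Kk) (hA : A ≤ Kk) (hB : B ≤ A) :
    Nonempty ((↥A ⧸ ((B ⊔ N) ⊓ A).addSubgroupOf A) ≃+
      (↥(AddSubgroup.map (mk' (N.addSubgroupOf Kk)) (A.addSubgroupOf Kk)) ⧸
        ((AddSubgroup.map (mk' (N.addSubgroupOf Kk)) (B.addSubgroupOf Kk)).addSubgroupOf
          (AddSubgroup.map (mk' (N.addSubgroupOf Kk)) (A.addSubgroupOf Kk))))) := by
  have hmem : ∀ a : ↥A, (QuotientAddGroup.mk (⟨(a : G), hA a.2⟩ : ↥Kk) :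
      ↥Kk ⧸ N.addSubgroupOf Kk) ∈
        AddSubgroup.map (mk' (N.addSubgroupOf Kk)) (A.addSubgroupOf Kk) :=
    fun a => ⟨⟨(a : G), hA a.2⟩, show ((⟨(a : G), hA a.2⟩ : ↥Kk)) ∈ A.addSubgroupOf Kk from
      (mem_addSubgroupOf).2 a.2, rfl⟩
  set ψ : ↥A →+ (↥(AddSubgroup.map (mk' (N.addSubgroupOf Kk)) (A.addSubgroupOf Kk)) ⧸
      ((AddSubgroup.map (mk' (N.addSubgroupOf Kk)) (B.addSubgroupOf Kk)).addSubgroupOf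
        (AddSubgroup.map (mk' (N.addSubgroupOf Kk)) (A.addSubgroupOf Kk)))) :=
    (QuotientAddGroup.mk' _).comp
      (AddMonoidHom.codRestrict
        ((QuotientAddGroup.mk' (N.addSubgroupOf Kk)).comp (AddSubgroup.inclusion hA)) _
        (fun a => hmem a)) with hψdef
  have hψ : ∀ a : ↥A, ψ a = QuotientAddGroup.mk
      ⟨QuotientAddGroup.mk (⟨(a : G), hA a.2⟩ : ↥Kk), hmem a⟩ := fun _ => rfl
  have hsurj : Function.Surjective ψ := by
    intro t
    obtain ⟨⟨ξ, hξ⟩, rfl⟩ := QuotientAddGroup.mk'_surjective _ t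
    obtain ⟨y, hy, rfl⟩ := hξ
    have hy' : (y : G) ∈ A := hy
    refine ⟨⟨(y : G), hy'⟩, ?_⟩
    rw [hψ]
    apply congrArg
    exact Subtype.ext rfl
  have hkerψ : AddMonoidHom.ker ψ = ((B ⊔ N) ⊓ A).addSubgroupOf A := by
    ext a
    rw [AddMonoidHom.mem_ker, mem_addSubgroupOf, hψ, mk_subtype_eq_zero_iff]
    show (QuotientAddGroup.mk (⟨(a : G), hA a.2⟩ : ↥Kk) : ↥Kk ⧸ N.addSubgroupOf Kk) ∈
        AddSubgroup.map (mk' (N.addSubgroupOf Kk)) (B.addSubgroupOf Kk) ↔ _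
    constructor
    · rintro ⟨b, hb, hba⟩
      have hb' : (b : G) ∈ B := hb
      rw [mk'_apply, QuotientAddGroup.eq] at hba
      have hv : -(b : G) + (a : G) ∈ N := hba
      rw [AddSubgroup.mem_inf]
      exact ⟨AddSubgroup.mem_sup.2 ⟨(b : G), hb', -(b : G) + (a : G), hv, by abel⟩, a.2⟩
    · intro hmem2
      rw [AddSubgroup.mem_inf] at hmem2
      obtain ⟨hba, -⟩ := hmem2
      rw [AddSubgroup.mem_sup] at hba
      obtain ⟨b, hb, v, hv, hsum⟩ := hba
      refine ⟨⟨b, hA (hB hb)⟩, show _ ∈ B.addSubgroupOf Kk from (mem_addSubgroupOf).2 hb, ?_⟩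
      rw [mk'_apply, QuotientAddGroup.eq]
      refine (mem_addSubgroupOf).2 ?_
      show -b + (a : G) ∈ N
      have he : -b + (a : G) = v := by rw [← hsum]; abel
      rw [he]; exact hv
  exact ⟨(quotientAddEquivOfEq hkerψ.symm).trans
    (QuotientAddGroup.quotientKerEquivOfSurjective ψ hsurj)⟩


include hFd in
theorem Zg_zero (r p p' n : ℤ) (hr : r = 0) (hp' : p = p') : Zg D F r p n = F p' n := by
  subst hp' hr
  refine le_antisymm inf_le_left (le_inf le_rfl ?_)
  rw [add_zero]
  exact hFd p n (n + 1) rfl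

theorem addSubgroupOf_inf_ambient {G : Type*} [AddCommGroup G] (Xs A : AddSubgroup G) :
    (Xs ⊓ A).addSubgroupOf A = Xs.addSubgroupOf A := by
  ext x
  rw [mem_addSubgroupOf, mem_addSubgroupOf, AddSubgroup.mem_inf]
  exact ⟨fun h => h.1, fun h => ⟨h, x.2⟩⟩

theorem inf_sup_calc {G : Type*} [AddCommGroup G] (Fp Fp1 Kk N : AddSubgroup G)
    (h1 : Fp1 ≤ Fp) (hN : N ≤ Kk) :
    ((Fp1 ⊓ Kk) ⊔ (N ⊓ Fp)) = ((Fp1 ⊓ Kk) ⊔ N) ⊓ (Fp ⊓ Kk) := by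
  ext x
  constructor
  · intro h
    obtain ⟨b, hb, v, hv, hsum⟩ := AddSubgroup.mem_sup.1 h
    have hb' := AddSubgroup.mem_inf.1 hb
    have hv' := AddSubgroup.mem_inf.1 hv
    rw [AddSubgroup.mem_inf]
    refine ⟨AddSubgroup.mem_sup.2 ⟨b, hb, v, hv'.1, hsum⟩, ?_⟩
    rw [AddSubgroup.mem_inf, ← hsum]
    exact ⟨add_mem (h1 hb'.1) hv'.2, add_mem hb'.2 (hN hv'.1)⟩
  · intro h
    obtain ⟨hs, hx⟩ := AddSubgroup.mem_inf.1 h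
    have hx' := AddSubgroup.mem_inf.1 hx
    obtain ⟨b, hb, v, hv, hsum⟩ := AddSubgroup.mem_sup.1 hs
    have hb' := AddSubgroup.mem_inf.1 hb
    refine AddSubgroup.mem_sup.2 ⟨b, hb, v, ?_, hsum⟩
    rw [AddSubgroup.mem_inf]
    have hveq : v = x - b := by rw [← hsum]; abel
    exact ⟨hv, by rw [hveq]; exact sub_mem hx'.1 (h1 hb'.1)⟩


/-- The spectral sequence of the filtered complex. -/
noncomputable def mkSS : AbSpectralSequence where
  E r p q := AddCommGrpCat.of (ULift.{0} (Epage D F (r : ℤ) p (p + q)))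
  d r p q p' q' h1 _h2 :=
    AddCommGrpCat.ofHom (uliftHom.{0} (dE D F hD2 (r : ℤ) p (p + q) p' (p' + q') (by omega) h1))
  d_comp r p q p' q' p'' q'' h1 h2 h3 h4 := by
    refine AddCommGrpCat.ext fun ξ => ?_
    show uliftHom.{0} (dE D F hD2 (r : ℤ) p' (p' + q') p'' (p'' + q'') (by omega) h3)
        (uliftHom.{0} (dE D F hD2 (r : ℤ) p (p + q) p' (p' + q') (by omega) h1) ξ) = 0
    exact congrArg ULift.up (dE_dE D F hD2 (r : ℤ) p (p + q) p' (p' + q') p'' (p'' + q'')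
      (by omega) h1 (by omega) h3 ξ.down)
  page_iso r p q pin qin pout qout h1 h2 h3 h4 := by
    obtain ⟨e⟩ := page_general D F hD2 hFmono (r : ℤ) p (p + q) pin (pin + qin)
      pout (pout + qout) (by omega) h1 (by omega) h3
    refine ⟨AddEquiv.ulift.trans (((EpageCongr D F (p + q)
      (show (((r + 1 : ℕ) : ℤ)) = (r : ℤ) + 1 by push_cast; ring) rfl).trans
      e).trans ((subquotCongr (upEquiv.{0})
        (AddMonoidHom.ker (dE D F hD2 (r : ℤ) p (p + q) pout (pout + qout) (by omega) h3))
        (AddMonoidHom.range (dE D F hD2 (r : ℤ) pin (pin + qin) p (p + q)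
          (by omega) h1))).trans (quotCongr (map_up_ker _) ?_)))⟩
    rw [map_up_range]; rfl

end lemmas

end Stmt19Aux


section SheafLemmas

open TopCat

variable {X : TopCat}

theorem mem_suppSections {G : AbSheaf X} {A : Set X} {s : G.val.obj (op ⊤)} :
    s ∈ suppSections G A ↔
      ∀ x : X, x ∉ A → TopCat.Presheaf.germ G.val ⊤ x trivial s = 0 := by
  simp only [suppSections, AddSubgroup.mem_iInf, AddMonoidHom.mem_ker, Subtype.forall]

theorem suppSections_mono {G : AbSheaf X} {A A' : Set X} (h : A ⊆ A') :
    suppSections G A ≤ suppSections G A' := by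
  intro s hs
  rw [mem_suppSections] at hs ⊢
  intro x hx
  exact hs x (fun hA => hx (h hA))

theorem suppSections_univ (G : AbSheaf X) : suppSections G Set.univ = ⊤ := by
  rw [eq_top_iff]
  intro s _
  rw [mem_suppSections]
  intro x hx
  exact absurd trivial hx

theorem suppSections_empty (G : AbSheaf X) : suppSections G ∅ = ⊥ := by
  rw [eq_bot_iff]
  intro s hs
  rw [mem_suppSections] at hs
  rw [AddSubgroup.mem_bot]
  apply TopCat.Presheaf.section_ext (F := (show TopCat.Sheaf AddCommGrpCat X from G)) ⊤ s 0
  intro x hx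
  show (TopCat.Presheaf.germ G.val ⊤ x hx) s = (TopCat.Presheaf.germ G.val ⊤ x hx) 0
  rw [map_zero]
  exact hs x (fun h => h)

/-- `globMap` as a bundled `AddMonoidHom` between the section types. -/
noncomputable def globMap' {K : ℤ → AbSheaf X}
    (δ : ∀ n n' : ℤ, n' = n + 1 → (K n ⟶ K n')) (n n' : ℤ) (h : n' = n + 1) :
    ((K n).val.obj (op ⊤) : Type _) →+ ((K n').val.obj (op ⊤) : Type _) :=
  (globMap δ n n' h).hom

/-- The filtration by supports. -/
noncomputable def Ffilt (K : ℤ → AbSheaf X) (Z : ℤ → Set X) :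
    ℤ → ∀ n : ℤ, AddSubgroup (((K n).val.obj (op ⊤) : Type _)) :=
  fun p n => suppSections (K n) (Z p)

theorem globMap'_comp {K : ℤ → AbSheaf X}
    (δ : ∀ n n' : ℤ, n' = n + 1 → (K n ⟶ K n'))
    (hδδ : ∀ (n n' n'' : ℤ) (h : n' = n + 1) (h' : n'' = n' + 1),
      δ n n' h ≫ δ n' n'' h' = 0)
    (n n' n'' : ℤ) (h : n' = n + 1) (h' : n'' = n' + 1) (x : (K n).val.obj (op ⊤)) :
    globMap' δ n' n'' h' (globMap' δ n n' h x) = 0 := by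
  have h0 := hδδ n n' n'' h h'
  calc globMap' δ n' n'' h' (globMap' δ n n' h x)
      = ((δ n n' h ≫ δ n' n'' h').hom.app (op ⊤)).hom x := rfl
    _ = ((0 : K n ⟶ K n'').hom.app (op ⊤)).hom x := by rw [h0]
    _ = 0 := rfl

theorem suppSections_globMap {K : ℤ → AbSheaf X}
    (δ : ∀ n n' : ℤ, n' = n + 1 → (K n ⟶ K n')) {A : Set X} (n n' : ℤ) (h : n' = n + 1)
    {s : (K n).val.obj (op ⊤)} (hs : s ∈ suppSections (K n) A) :
    globMap' δ n n' h s ∈ suppSections (K n') A := by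
  rw [mem_suppSections] at hs ⊢
  intro x hx
  have hcomm := TopCat.Presheaf.stalkFunctor_map_germ (C := AddCommGrpCat) ⊤ x trivial
    (δ n n' h).hom
  have h1 : TopCat.Presheaf.germ (K n').val ⊤ x trivial (globMap' δ n n' h s)
      = ((TopCat.Presheaf.stalkFunctor AddCommGrpCat x).map (δ n n' h).hom)
          (TopCat.Presheaf.germ (K n).val ⊤ x trivial s) := by
    have h2 := congrArg (fun (f : (K n).val.obj (op ⊤) ⟶ TopCat.Presheaf.stalk (K n').val x) => f s) hcomm
    exact h2.symm
  rw [h1, hs x hx]; exact map_zero _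

end SheafLemmas


/-- let `X` be a topological space with a filtration by closed subsets
`X = Z₀ ⊇ Z₁ ⊇ ⋯ ⊇ Z_{m+1} = ∅` and `F` a sheaf of abelian groups on `X`, with a flabby
resolution `0 → F → K⁰ → K¹ → ⋯` (the canonical Godement resolution is one).  Then there
is a spectral sequence with `E₁^{pq} = H^{p+q}_{Z_p∖Z_{p+1}}(X, F)` — realized à la
Godement as the cohomology `(relative cocycles)/(relative coboundaries)` in degree `p+q`
of the quotient complex `Γ_{Z_p}(K^•)/Γ_{Z_{p+1}}(K^•)` of global sections with supports
— converging to `H^{p+q}(X, F)`, the cohomology of the global sections of `K^•`. -/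
theorem stmt19 (X : TopCat) (F : AbSheaf X) (m : ℕ) (Z : ℤ → Set X)
    (hZcl : ∀ p, IsClosed (Z p))
    (hZanti : ∀ p p' : ℤ, p ≤ p' → Z p' ⊆ Z p)
    (hZ0 : ∀ p : ℤ, p ≤ 0 → Z p = Set.univ)
    (hZtop : ∀ p : ℤ, (m : ℤ) + 1 ≤ p → Z p = ∅)
    (K : ℤ → AbSheaf X) (δ : ∀ n n' : ℤ, n' = n + 1 → (K n ⟶ K n'))
    (hδδ : ∀ (n n' n'' : ℤ) (h : n' = n + 1) (h' : n'' = n' + 1),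
      δ n n' h ≫ δ n' n'' h' = 0)
    (hKneg : ∀ n : ℤ, n < 0 → Limits.IsZero (K n))
    (hflabby : ∀ (n : ℤ) (U : Opens X),
      Function.Surjective ((K n).val.map (homOfLE (le_top : U ≤ ⊤)).op))
    (ε : F ⟶ K 0)
    (hres : ∀ x : X,
      Function.Injective ⇑((TopCat.Presheaf.stalkFunctor AddCommGrpCat x).map ε.hom) ∧
      Function.Exact ⇑((TopCat.Presheaf.stalkFunctor AddCommGrpCat x).map ε.hom)
        ⇑((TopCat.Presheaf.stalkFunctor AddCommGrpCat x).map (δ 0 1 rfl).hom) ∧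
      ∀ n : ℤ, 0 ≤ n →
        Function.Exact ⇑((TopCat.Presheaf.stalkFunctor AddCommGrpCat x).map (δ n (n + 1) rfl).hom)
          ⇑((TopCat.Presheaf.stalkFunctor AddCommGrpCat x).map (δ (n + 1) (n + 1 + 1) rfl).hom)) :
    ∃ S : AbSpectralSequence,
      (∀ p q : ℤ,
        Nonempty ((S.E 1 p q) ≃+
          (relCocycles Z δ p (p + q) ⧸
            ((relCoboundaries Z δ p (p + q)).addSubgroupOf (relCocycles Z δ p (p + q)))))) ∧
      Nonempty (AbSSConvergesTo S (globalCohomology δ)) := by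
  classical
  have hD2 : ∀ (n n' n'' : ℤ) (h : n' = n + 1) (h' : n'' = n' + 1)
      (x : (K n).val.obj (op ⊤)),
      globMap' δ n' n'' h' (globMap' δ n n' h x) = 0 := globMap'_comp δ hδδ
  have hFmono : ∀ p p' : ℤ, p ≤ p' → ∀ n, Ffilt K Z p' n ≤ Ffilt K Z p n :=
    fun p p' h n => suppSections_mono (hZanti p p' h)
  have hFd : ∀ (p n n' : ℤ) (h : n' = n + 1),
      Ffilt K Z p n ≤ (Ffilt K Z p n').comap (globMap' δ n n' h) :=
    fun p n n' h s hs => suppSections_globMap δ n n' h hs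
  have hFtop : ∀ p : ℤ, p ≤ 0 → ∀ n, Ffilt K Z p n = ⊤ := by
    intro p hp n
    show suppSections (K n) (Z p) = ⊤
    rw [hZ0 p hp]
    exact suppSections_univ _
  have hFbot : ∀ p : ℤ, (m : ℤ) + 1 ≤ p → ∀ n, Ffilt K Z p n = ⊥ := by
    intro p hp n
    show suppSections (K n) (Z p) = ⊥
    rw [hZtop p hp]
    exact suppSections_empty _
  refine ⟨Stmt19Aux.mkSS (C := fun n => ((K n).val.obj (op ⊤) : Type _)) (globMap' δ) (Ffilt K Z) hD2 hFmono, ?_, ?_⟩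
  · -- E₁ identification
    intro p q
    have hA : Stmt19Aux.Zg (globMap' δ) (Ffilt K Z) 1 p (p + q) = relCocycles Z δ p (p + q) := rfl
    have hBnd : Stmt19Aux.Bnd (globMap' δ) (Ffilt K Z) 1 p (p + q) =
        suppSections (K (p + q)) (Z (p + 1)) ⊔
          AddSubgroup.map (globMap δ (p + q - 1) (p + q) (by omega)).hom
            (suppSections (K (p + q - 1)) (Z p)) := by
      rw [Stmt19Aux.Bnd_eq (globMap' δ) (Ffilt K Z) (p + q - 1) (p + q) (by ring)]
      rw [Stmt19Aux.Zg_zero (globMap' δ) (Ffilt K Z) hFd (1 - 1) (p + 1) (p + 1) (p + q)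
        (by ring) rfl]
      rw [Stmt19Aux.Zg_zero (globMap' δ) (Ffilt K Z) hFd (1 - 1) (p - 1 + 1) p (p + q - 1)
        (by ring) (by ring)]
      rfl
    have hB : (Stmt19Aux.Bnd (globMap' δ) (Ffilt K Z) 1 p (p + q)).addSubgroupOf
        (relCocycles Z δ p (p + q)) =
        (relCoboundaries Z δ p (p + q)).addSubgroupOf (relCocycles Z δ p (p + q)) := by
      rw [hBnd, show relCoboundaries Z δ p (p + q) = (suppSections (K (p + q)) (Z (p + 1)) ⊔
          AddSubgroup.map (globMap δ (p + q - 1) (p + q) (by omega)).hom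
            (suppSections (K (p + q - 1)) (Z p))) ⊓ relCocycles Z δ p (p + q) from rfl,
        Stmt19Aux.addSubgroupOf_inf_ambient]
    exact ⟨AddEquiv.ulift.trans ((Stmt19Aux.EpageCongr (globMap' δ) (Ffilt K Z) (p + q)
      (show (((1 : ℕ) : ℤ)) = 1 by norm_num) rfl).trans (Stmt19Aux.quotCongr hA hB))⟩
  · -- convergence
    refine ⟨⟨fun p n => AddSubgroup.map
        (QuotientAddGroup.mk' ((AddMonoidHom.range (globMap' δ (n - 1) n (by omega))).addSubgroupOf
          (AddMonoidHom.ker (globMap' δ n (n + 1) rfl))))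
        ((Ffilt K Z p n ⊓ AddMonoidHom.ker (globMap' δ n (n + 1) rfl)).addSubgroupOf
          (AddMonoidHom.ker (globMap' δ n (n + 1) rfl))), ?_, ?_, ?_, ?_⟩⟩
    · -- antitone
      intro p p' hpp' n
      refine AddSubgroup.map_mono ?_
      intro x hx
      rw [AddSubgroup.mem_addSubgroupOf, AddSubgroup.mem_inf] at hx ⊢
      exact ⟨hFmono p p' hpp' n hx.1, hx.2⟩
    · -- exhaustive
      intro n
      refine ⟨0, fun p hp => ?_⟩
      beta_reduce
      rw [hFtop p hp n, top_inf_eq, AddSubgroup.addSubgroupOf_self]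
      exact AddSubgroup.map_top_of_surjective _ (QuotientAddGroup.mk'_surjective _)
    · -- separated
      intro n
      refine ⟨(m : ℤ) + 1, fun p hp => ?_⟩
      beta_reduce
      rw [hFbot p hp n, bot_inf_eq]
      have hb : (⊥ : AddSubgroup ((K n).val.obj (op ⊤))).addSubgroupOf
          (AddMonoidHom.ker (globMap' δ n (n + 1) rfl)) = ⊥ := by
        ext x
        simp [AddSubgroup.mem_addSubgroupOf]
      rw [hb]; exact AddSubgroup.map_bot _
    · -- graded pieces
      intro p q
      refine ⟨((m : ℤ) + 1 - p).toNat + (p + 1).toNat + 1, fun r hr => ?_⟩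
      have hr1 := Int.self_le_toNat ((m : ℤ) + 1 - p)
      have hr2 := Int.self_le_toNat (p + 1)
      have hr3 : ((((m : ℤ) + 1 - p).toNat + (p + 1).toNat + 1 : ℕ) : ℤ) ≤ (r : ℤ) := by
        exact_mod_cast hr
      push_cast at hr3
      have hbot : Ffilt K Z (p + (r : ℤ)) ((p + q) + 1) = ⊥ :=
        hFbot _ (by omega) _
      have htop : Ffilt K Z (p - (r : ℤ) + 1) ((p + q) - 1) = ⊤ :=
        hFtop _ (by omega) _
      have hZst := Stmt19Aux.Zg_stable (globMap' δ) (Ffilt K Z) (r := (r : ℤ)) (p := p)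
        (n := p + q) hbot
      have hBst := Stmt19Aux.Bnd_stable (globMap' δ) (Ffilt K Z) (r := (r : ℤ)) (p := p)
        (n := p + q) hbot htop
      have hNK : AddMonoidHom.range (globMap' δ ((p + q) - 1) (p + q) (by omega)) ≤
          AddMonoidHom.ker (globMap' δ (p + q) ((p + q) + 1) rfl) := by
        rintro y ⟨x, rfl⟩
        rw [AddMonoidHom.mem_ker]
        exact hD2 _ _ _ (by omega) rfl x
      have hsc := Stmt19Aux.inf_sup_calc (Ffilt K Z p (p + q)) (Ffilt K Z (p + 1) (p + q))
        (AddMonoidHom.ker (globMap' δ (p + q) ((p + q) + 1) rfl))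
        (AddMonoidHom.range (globMap' δ ((p + q) - 1) (p + q) (by omega)))
        (hFmono p (p + 1) (by omega) (p + q)) hNK
      obtain ⟨e⟩ := Stmt19Aux.graded_iso
        (AddMonoidHom.ker (globMap' δ (p + q) ((p + q) + 1) rfl))
        (AddMonoidHom.range (globMap' δ ((p + q) - 1) (p + q) (by omega)))
        (Ffilt K Z p (p + q) ⊓ AddMonoidHom.ker (globMap' δ (p + q) ((p + q) + 1) rfl))
        (Ffilt K Z (p + 1) (p + q) ⊓ AddMonoidHom.ker (globMap' δ (p + q) ((p + q) + 1) rfl))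
        hNK inf_le_right (inf_le_inf (hFmono p (p + 1) (by omega) (p + q)) le_rfl)
      refine ⟨AddEquiv.ulift.trans ((Stmt19Aux.quotCongr hZst ?_).trans e)⟩
      rw [hBst, hsc]
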